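/- A modular quantal frame Q in which the top element is weakly semi-simple (⊤ = ⋁{f*g° : f, g simple}) has every element weakly semi-simple: for all q ∈ Q, q = ⋁{h*g° : h*g° ≤ q, h and g simple}. -/

import Mathlib

theorem stmt_12 {Q : Type*} [Order.Frame Q] [Monoid Q]
    (inv : Q → Q)
    (inv_mul : ∀ a b : Q, inv (a * b) = inv b * inv a)
    (inv_inv : ∀ a : Q, inv (inv a) = a)
    (inv_sSup : ∀ S : Set Q, inv (sSup S) = ⨆ a ∈ S, inv a)
    (mul_sSup : ∀ (a : Q) (S : Set Q), a * sSup S = ⨆ b ∈ S, a * b)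
    (sSup_mul : ∀ (a : Q) (S : Set Q), sSup S * a = ⨆ b ∈ S, b * a)
    (modular : ∀ f g h : Q, g * f ⊓ h ≤ g * (f ⊓ inv g * h))
    (htop : (⊤ : Q) = sSup {x : Q | ∃ f g : Q, f * inv f ≤ 1 ∧ g * inv g ≤ 1 ∧ x = f * inv g}) :
    ∀ q : Q, q = sSup {x : Q | ∃ h g : Q, h * inv h ≤ 1 ∧ g * inv g ≤ 1 ∧ x = h * inv g ∧ x ≤ q} := by
  -- basic monotonicity facts
  have mulL : ∀ (c : Q) {a b : Q}, a ≤ b → c * a ≤ c * b := by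
    intro c a b hab
    have h1 : c * (a ⊔ b) = c * a ⊔ c * b := by
      have := mul_sSup c {a, b}
      rwa [sSup_pair, iSup_pair] at this
    have h2 : a ⊔ b = b := sup_eq_right.mpr hab
    rw [h2] at h1
    exact le_sup_left.trans h1.ge
  have mulR : ∀ (c : Q) {a b : Q}, a ≤ b → a * c ≤ b * c := by
    intro c a b hab
    have h1 : (a ⊔ b) * c = a * c ⊔ b * c := by
      have := sSup_mul c {a, b}
      rwa [sSup_pair, iSup_pair] at this
    have h2 : a ⊔ b = b := sup_eq_right.mpr hab
    rw [h2] at h1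
    exact le_sup_left.trans h1.ge
  have invMono : ∀ {a b : Q}, a ≤ b → inv a ≤ inv b := by
    intro a b hab
    have h1 : inv (a ⊔ b) = inv a ⊔ inv b := by
      have := inv_sSup {a, b}
      rwa [sSup_pair, iSup_pair] at this
    have h2 : a ⊔ b = b := sup_eq_right.mpr hab
    rw [h2] at h1
    exact le_sup_left.trans h1.ge
  have inv_one : inv (1 : Q) = 1 := by
    have h1 : inv (inv 1 * (1 : Q)) = inv 1 * inv (inv 1) := inv_mul _ _
    simpa [inv_inv] using h1.symm
  have inv_inf : ∀ a b : Q, inv (a ⊓ b) = inv a ⊓ inv b := by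
    intro a b
    apply le_antisymm
    · exact le_inf (invMono inf_le_left) (invMono inf_le_right)
    · have := invMono (le_inf (c := inv a ⊓ inv b)
        (a := inv a) (b := inv b) inf_le_left inf_le_right)
      have h1 : inv (inv a ⊓ inv b) ≤ inv (inv a) := invMono inf_le_left
      have h2 : inv (inv a ⊓ inv b) ≤ inv (inv b) := invMono inf_le_right
      rw [inv_inv] at h1; rw [inv_inv] at h2
      have h3 := invMono (le_inf h1 h2)
      rwa [inv_inv] at h3
  -- right modular law
  have modularR : ∀ a b c : Q, a * b ⊓ c ≤ (a ⊓ c * inv b) * b := by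
    intro a b c
    have h1 : inv (a * b ⊓ c) ≤ inv b * (inv a ⊓ inv (inv b) * inv c) := by
      calc inv (a * b ⊓ c) = inv b * inv a ⊓ inv c := by rw [inv_inf, inv_mul]
        _ ≤ _ := modular (inv a) (inv b) (inv c)
    have h4 := invMono h1
    rw [inv_inv] at h4
    calc a * b ⊓ c ≤ inv (inv b * (inv a ⊓ inv (inv b) * inv c)) := h4
      _ = (a ⊓ c * inv b) * b := by
          simp only [inv_mul, inv_inf, inv_inv]
  intro q
  set T : Set Q := {x : Q | ∃ h g : Q, h * inv h ≤ 1 ∧ g * inv g ≤ 1 ∧ x = h * inv g ∧ x ≤ q}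
    with hT
  apply le_antisymm
  · -- q ≤ sSup T
    have hq : q = q ⊓ sSup {x : Q | ∃ f g : Q, f * inv f ≤ 1 ∧ g * inv g ≤ 1 ∧ x = f * inv g} := by
      rw [← htop, inf_top_eq]
    rw [hq, inf_sSup_eq]
    apply iSup_le; intro x; apply iSup_le; intro hx
    obtain ⟨f, g, hf, hg, rfl⟩ := hx
    -- key step
    set h : Q := f * (inv f * q * g ⊓ 1) with hh
    have key : q ⊓ f * inv g ≤ h * inv g := by
      have s1 : f * inv g ⊓ q ≤ f * (inv g ⊓ inv f * q) := modular (inv g) f q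
      have s2 : inv g ⊓ inv f * q ≤ (1 ⊓ (inv f * q) * g) * inv g := by
        have := modularR 1 (inv g) (inv f * q)
        simpa [inv_inv] using this
      have s3 : f * (inv g ⊓ inv f * q) ≤ f * ((1 ⊓ inv f * q * g) * inv g) := by
        apply mulL
        calc inv g ⊓ inv f * q ≤ (1 ⊓ (inv f * q) * g) * inv g := s2
          _ = (1 ⊓ inv f * q * g) * inv g := by rw [mul_assoc]
      calc q ⊓ f * inv g = f * inv g ⊓ q := inf_comm _ _
        _ ≤ f * (inv g ⊓ inv f * q) := s1
        _ ≤ f * ((1 ⊓ inv f * q * g) * inv g) := s3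
        _ = h * inv g := by rw [hh, ← mul_assoc, inf_comm]
    have hle_q : h * inv g ≤ q := by
      have : h * inv g ≤ f * (inv f * q * g) * inv g := by
        apply mulR; apply mulL; exact inf_le_left
      calc h * inv g ≤ f * (inv f * q * g) * inv g := this
        _ = (f * inv f) * q * (g * inv g) := by simp [mul_assoc]
        _ ≤ 1 * q * (g * inv g) := by
            apply mulR; apply mulR; exact hf
        _ ≤ 1 * q * 1 := mulL _ hg
        _ = q := by simp
    have hsimple : h * inv h ≤ 1 := by
      have e1 : inv h = inv (inv f * q * g ⊓ 1) * inv f := by rw [hh, inv_mul]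
      have e2 : inv (inv f * q * g ⊓ 1) ≤ 1 := by
        have := invMono (inf_le_right (a := inv f * q * g) (b := 1))
        rwa [inv_one] at this
      calc h * inv h = f * ((inv f * q * g ⊓ 1) * (inv (inv f * q * g ⊓ 1) * inv f)) := by
            rw [hh, e1, mul_assoc]
        _ ≤ f * (1 * (1 * inv f)) := by
            apply mulL
            exact (mulR _ inf_le_right).trans (mulL _ (mulR _ e2))
        _ = f * inv f := by simp
        _ ≤ 1 := hf
    have hmem : h * inv g ∈ T := ⟨h, g, hsimple, hg, rfl, hle_q⟩
    exact key.trans (le_sSup hmem)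
  · apply sSup_le
    rintro x ⟨h, g, _, _, _, hxq⟩
    exact hxq
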